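/- For any odd positive integer n and every X > 0, the function H(X) = X²(1 + e^{-πX}) / ((n² + X²)(1 - e^{-πX})) is strictly increasing, i.e., its derivative (2n²X(1 - e^{-2πX}) - 2πX²e^{-πX}(n² + X²)) / ((n² + X²)²(1 - e^{-πX})²) is positive for all X > 0. -/

import Mathlib

open Filter Set Real

lemma cosh_lb (t : ℝ) (ht : 0 ≤ t) : 1 + t ^ 2 / 2 ≤ Real.cosh t := by
  have h : Real.cosh (2 * (t / 2)) = 1 + 2 * Real.sinh (t / 2) ^ 2 := by
    rw [Real.cosh_two_mul, Real.cosh_sq']; ring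
  rw [show t = 2 * (t / 2) by ring, h]
  have hs : t / 2 ≤ Real.sinh (t / 2) := Real.self_le_sinh_iff.2 (by linarith)
  nlinarith [Real.sinh_nonneg_iff.2 (by linarith : (0:ℝ) ≤ t / 2)]

lemma sinh_lb (t : ℝ) (ht : 0 ≤ t) : t + t ^ 3 / 8 ≤ Real.sinh t := by
  have h : Real.sinh (2 * (t / 2)) = 2 * Real.sinh (t / 2) * Real.cosh (t / 2) :=
    Real.sinh_two_mul _
  rw [show t = 2 * (t / 2) by ring, h]
  have hs : t / 2 ≤ Real.sinh (t / 2) := Real.self_le_sinh_iff.2 (by linarith)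
  have hc : 1 + (t / 2) ^ 2 / 2 ≤ Real.cosh (t / 2) := cosh_lb _ (by linarith)
  nlinarith [Real.cosh_pos (x := t / 2)]

lemma exp_sinh_id (X : ℝ) :
    1 - Real.exp (-2 * π * X) = 2 * Real.exp (-π * X) * Real.sinh (π * X) := by
  have h1 : Real.exp (-π * X) * Real.exp (π * X) = 1 := by
    rw [← Real.exp_add]; norm_num
  have h2 : Real.exp (-2 * π * X) = Real.exp (-π * X) * Real.exp (-π * X) := by
    rw [← Real.exp_add]; ring_nf
  rw [Real.sinh_eq, h2, show -(π * X) = -π * X by ring]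
  nlinarith [h1]

lemma num_pos (n : ℕ) (hn : 0 < n) (X : ℝ) (hX : 0 < X) :
    0 < 2 * (n : ℝ) ^ 2 * X * (1 - Real.exp (-2 * π * X)) -
        2 * π * X ^ 2 * Real.exp (-π * X) * ((n : ℝ) ^ 2 + X ^ 2) := by
  have hn1 : (1 : ℝ) ≤ (n : ℝ) ^ 2 := by
    have : (1 : ℝ) ≤ (n : ℝ) := by exact_mod_cast hn
    nlinarith
  have hπ : (3 : ℝ) < π := Real.pi_gt_three
  have hs : π * X + (π * X) ^ 3 / 8 ≤ Real.sinh (π * X) :=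
    sinh_lb _ (by positivity)
  have hπ2 : (4 : ℝ) < π ^ 2 := by nlinarith
  have h1 : 2 * (n : ℝ) ^ 2 * (π * X + (π * X) ^ 3 / 8) ≤ 2 * (n : ℝ) ^ 2 * Real.sinh (π * X) :=
    mul_le_mul_of_nonneg_left hs (by positivity)
  have hkey : 0 < 2 * (n : ℝ) ^ 2 * Real.sinh (π * X) - π * X * (n : ℝ) ^ 2 - π * X ^ 3 := by
    nlinarith [h1, mul_pos (pow_pos Real.pi_pos 3) (pow_pos hX 3),
      mul_pos Real.pi_pos (pow_pos hX 3), mul_pos Real.pi_pos hX]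
  have heq : 2 * (n : ℝ) ^ 2 * X * (1 - Real.exp (-2 * π * X)) -
        2 * π * X ^ 2 * Real.exp (-π * X) * ((n : ℝ) ^ 2 + X ^ 2) =
      2 * X * Real.exp (-π * X) *
        (2 * (n : ℝ) ^ 2 * Real.sinh (π * X) - π * X * (n : ℝ) ^ 2 - π * X ^ 3) := by
    rw [exp_sinh_id]; ring
  rw [heq]
  have := Real.exp_pos (-π * X)
  positivity

lemma hasDeriv_aux (n : ℕ) (X : ℝ) (hX : 0 < X) :
    HasDerivAt (fun X : ℝ => X ^ 2 * (1 + Real.exp (-π * X)) /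
        (((n : ℝ) ^ 2 + X ^ 2) * (1 - Real.exp (-π * X))))
      ((2 * (n : ℝ) ^ 2 * X * (1 - Real.exp (-2 * π * X)) -
            2 * π * X ^ 2 * Real.exp (-π * X) * ((n : ℝ) ^ 2 + X ^ 2)) /
          (((n : ℝ) ^ 2 + X ^ 2) ^ 2 * (1 - Real.exp (-π * X)) ^ 2)) X := by
  have hE1 : Real.exp (-π * X) < 1 := by
    rw [Real.exp_lt_one_iff]
    nlinarith [Real.pi_pos]
  have hvpos : 0 < ((n : ℝ) ^ 2 + X ^ 2) * (1 - Real.exp (-π * X)) := by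
    have : 0 < (n : ℝ) ^ 2 + X ^ 2 := by positivity
    nlinarith
  have hE : HasDerivAt (fun X : ℝ => Real.exp (-π * X)) (-π * Real.exp (-π * X)) X := by
    have h := ((hasDerivAt_id X).const_mul (-π)).exp
    simpa [mul_comm] using h
  have hu : HasDerivAt (fun X : ℝ => X ^ 2 * (1 + Real.exp (-π * X)))
      (2 * X * (1 + Real.exp (-π * X)) + X ^ 2 * (-π * Real.exp (-π * X))) X := by
    have := (hasDerivAt_pow 2 X).mul ((hasDerivAt_const X (1:ℝ)).add hE)
    exact this.congr_deriv (by simp only [Pi.add_apply]; ring)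
  have hv : HasDerivAt (fun X : ℝ => ((n : ℝ) ^ 2 + X ^ 2) * (1 - Real.exp (-π * X)))
      (2 * X * (1 - Real.exp (-π * X)) +
        ((n : ℝ) ^ 2 + X ^ 2) * (π * Real.exp (-π * X))) X := by
    have := ((hasDerivAt_const X ((n:ℝ)^2)).add (hasDerivAt_pow 2 X)).mul
      ((hasDerivAt_const X (1:ℝ)).sub hE)
    exact this.congr_deriv (by simp only [Pi.add_apply, Pi.sub_apply]; ring)
  have hdiv := hu.div hv (ne_of_gt hvpos)
  have hDpos : 0 < ((n : ℝ) ^ 2 + X ^ 2) ^ 2 * (1 - Real.exp (-π * X)) ^ 2 := by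
    have h1 : 0 < (n : ℝ) ^ 2 + X ^ 2 := by positivity
    have h2 : 0 < 1 - Real.exp (-π * X) := by linarith
    positivity
  refine hdiv.congr_deriv ?_
  rw [div_eq_div_iff (ne_of_gt (pow_pos hvpos 2)) (ne_of_gt hDpos)]
  rw [show (-2 * π * X) = (-π * X) + (-π * X) by ring, Real.exp_add]
  ring

theorem stmt_2 (n : ℕ) (hn : 0 < n) (hodd : Odd n) :
    StrictMonoOn (fun X : ℝ => X ^ 2 * (1 + Real.exp (-π * X)) /
        (((n : ℝ) ^ 2 + X ^ 2) * (1 - Real.exp (-π * X)))) (Set.Ioi 0) ∧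
    ∀ X : ℝ, 0 < X →
      0 < (2 * (n : ℝ) ^ 2 * X * (1 - Real.exp (-2 * π * X)) -
            2 * π * X ^ 2 * Real.exp (-π * X) * ((n : ℝ) ^ 2 + X ^ 2)) /
          (((n : ℝ) ^ 2 + X ^ 2) ^ 2 * (1 - Real.exp (-π * X)) ^ 2) := by
  have hpos : ∀ X : ℝ, 0 < X →
      0 < (2 * (n : ℝ) ^ 2 * X * (1 - Real.exp (-2 * π * X)) -
            2 * π * X ^ 2 * Real.exp (-π * X) * ((n : ℝ) ^ 2 + X ^ 2)) /
          (((n : ℝ) ^ 2 + X ^ 2) ^ 2 * (1 - Real.exp (-π * X)) ^ 2) := by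
    intro X hX
    have hE1 : Real.exp (-π * X) < 1 := by
      rw [Real.exp_lt_one_iff]; nlinarith [Real.pi_pos]
    have hD : 0 < ((n : ℝ) ^ 2 + X ^ 2) ^ 2 * (1 - Real.exp (-π * X)) ^ 2 := by
      have h1 : 0 < (n : ℝ) ^ 2 + X ^ 2 := by positivity
      have h2 : 0 < 1 - Real.exp (-π * X) := by linarith
      positivity
    exact div_pos (num_pos n hn X hX) hD
  refine ⟨?_, hpos⟩
  apply strictMonoOn_of_deriv_pos (convex_Ioi 0)
  · apply ContinuousOn.div
    · fun_prop
    · fun_prop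
    · intro x hx
      have hx : 0 < x := hx
      have hE1 : Real.exp (-π * x) < 1 := by
        rw [Real.exp_lt_one_iff]; nlinarith [Real.pi_pos]
      have h1 : 0 < (n : ℝ) ^ 2 + x ^ 2 := by positivity
      nlinarith
  · intro X hX
    rw [interior_Ioi] at hX
    rw [(hasDeriv_aux n X hX).deriv]
    exact hpos X hX
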